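/- With the notation of the conformal Lagrangian set-up for the structure H: let x : ℝ → ℝ^{4n} be a C² curve, and suppose that for every t ∈ ℝ and every w ∈ ℝ^{4n}, Φ_L^H(x(t))(ẋ(t), w) = D₁E_L^H(x(t), ẋ(t))·w, where D₁ denotes the Fréchet derivative of E_L^H in its first (position) argument with the velocity argument held fixed. Then the conformal Euler–Lagrange equations (3.6) hold along x: for every i ∈ {1,…,n} and every t ∈ ℝ, ab·(d/dt)(e^{−λ(x(t))}·(∂L/∂x_i)(x(t))) + (∂L/∂x_{3n+i})(x(t)) = 0, ab·(d/dt)(e^{−λ(x(t))}·(∂L/∂x_{n+i})(x(t))) + (∂L/∂x_{2n+i})(x(t)) = 0, ab·(d/dt)(e^{λ(x(t))}·(∂L/∂x_{2n+i})(x(t))) + (∂L/∂x_{n+i})(x(t)) = 0, and ab·(d/dt)(e^{λ(x(t))}·(∂L/∂x_{3n+i})(x(t))) + (∂L/∂x_i)(x(t)) = 0. -/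

import Mathlib

open Real

noncomputable section

/-- The partial derivative `∂f/∂x_k` of `f : ℝ^{4n} → ℝ` at `x`, in the
coordinate direction `k`. -/
def pd {n : ℕ} (f : ((Fin 4 × Fin n) → ℝ) → ℝ) (k : Fin 4 × Fin n)
    (x : (Fin 4 × Fin n) → ℝ) : ℝ :=
  fderiv ℝ f x (Pi.single k 1)

/-- The conformal 1-form `d_H L` of the structure `H`, viewed as a map
assigning to each point `x` the linear functional `w ↦ (d_H L)(x)(w)`. -/
def omegaH {n : ℕ} (a b : ℝ) (L lam : ((Fin 4 × Fin n) → ℝ) → ℝ)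
    (x w : (Fin 4 × Fin n) → ℝ) : ℝ :=
  ∑ i : Fin n,
    (-(a * b * exp (lam x) * pd L (3, i) x * w (0, i))
     - a * b * exp (lam x) * pd L (2, i) x * w (1, i)
     - a * b * exp (-lam x) * pd L (1, i) x * w (2, i)
     - a * b * exp (-lam x) * pd L (0, i) x * w (3, i))

/-- The closed 2-form `Φ_L^H = -d(d_H L)`:
`Φ_L^H(x)(u, v) = (Dω_H(x)·v)(u) - (Dω_H(x)·u)(v)`. -/
def PhiH {n : ℕ} (a b : ℝ) (L lam : ((Fin 4 × Fin n) → ℝ) → ℝ)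
    (x u v : (Fin 4 × Fin n) → ℝ) : ℝ :=
  fderiv ℝ (fun y => omegaH a b L lam y u) x v
    - fderiv ℝ (fun y => omegaH a b L lam y v) x u

/-- The conformal energy function `E_L^H` at a point `x` with velocity `X`. -/
def EH {n : ℕ} (a b : ℝ) (L lam : ((Fin 4 × Fin n) → ℝ) → ℝ)
    (x X : (Fin 4 × Fin n) → ℝ) : ℝ :=
  (∑ i : Fin n,
    (-(a * b * X (0, i) * exp (lam x) * pd L (3, i) x)
     - a * b * X (1, i) * exp (lam x) * pd L (2, i) x
     - a * b * X (2, i) * exp (-lam x) * pd L (1, i) x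
     - a * b * X (3, i) * exp (-lam x) * pd L (0, i) x)) - L x


section Aux
variable {n : ℕ} (a b : ℝ) (L lam : ((Fin 4 × Fin n) → ℝ) → ℝ) (j : Fin n)

lemma red0 : (fun y => omegaH a b L lam y (Pi.single ((0 : Fin 4), j) 1)) =
    fun y => -(a * b) * (exp (lam y) * pd L (3, j) y) := by
  funext y
  simp only [omegaH, Pi.single_apply, Prod.mk.injEq, mul_ite, mul_one, mul_zero]
  rw [Finset.sum_eq_single j]
  · simp (config := { decide := true }) only [reduceIte]; ring
  · intro i _ hij; simp [hij, Ne.symm hij]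
  · simp

lemma red1 : (fun y => omegaH a b L lam y (Pi.single ((1 : Fin 4), j) 1)) =
    fun y => -(a * b) * (exp (lam y) * pd L (2, j) y) := by
  funext y
  simp only [omegaH, Pi.single_apply, Prod.mk.injEq, mul_ite, mul_one, mul_zero]
  rw [Finset.sum_eq_single j]
  · simp (config := { decide := true }) only [reduceIte]; ring
  · intro i _ hij; simp [hij, Ne.symm hij]
  · simp

lemma red2 : (fun y => omegaH a b L lam y (Pi.single ((2 : Fin 4), j) 1)) =
    fun y => -(a * b) * (exp (-lam y) * pd L (1, j) y) := by
  funext y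
  simp only [omegaH, Pi.single_apply, Prod.mk.injEq, mul_ite, mul_one, mul_zero]
  rw [Finset.sum_eq_single j]
  · simp (config := { decide := true }) only [reduceIte]; ring
  · intro i _ hij; simp [hij, Ne.symm hij]
  · simp

lemma red3 : (fun y => omegaH a b L lam y (Pi.single ((3 : Fin 4), j) 1)) =
    fun y => -(a * b) * (exp (-lam y) * pd L (0, j) y) := by
  funext y
  simp only [omegaH, Pi.single_apply, Prod.mk.injEq, mul_ite, mul_one, mul_zero]
  rw [Finset.sum_eq_single j]
  · simp (config := { decide := true }) only [reduceIte]; ring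
  · intro i _ hij; simp [hij, Ne.symm hij]
  · simp
end Aux

/-- Along an integral curve of the dynamical equation `i_X Φ_L^H = dE_L^H`
(equation (1.1)), the conformal Euler–Lagrange equations (3.6) hold. -/
theorem stmt10 (n : ℕ) (a b : ℝ) (L lam : ((Fin 4 × Fin n) → ℝ) → ℝ)
    (hL : ContDiff ℝ 2 L) (hlam : ContDiff ℝ 2 lam)
    (x : ℝ → (Fin 4 × Fin n) → ℝ) (hx : ContDiff ℝ 2 x)
    (hdyn : ∀ (t : ℝ) (w : (Fin 4 × Fin n) → ℝ),
      PhiH a b L lam (x t) (deriv x t) w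
        = fderiv ℝ (fun y => EH a b L lam y (deriv x t)) (x t) w) :
    ∀ (i : Fin n) (t : ℝ),
      a * b * deriv (fun s => exp (-lam (x s)) * pd L (0, i) (x s)) t
          + pd L (3, i) (x t) = 0 ∧
      a * b * deriv (fun s => exp (-lam (x s)) * pd L (1, i) (x s)) t
          + pd L (2, i) (x t) = 0 ∧
      a * b * deriv (fun s => exp (lam (x s)) * pd L (2, i) (x s)) t
          + pd L (1, i) (x t) = 0 ∧
      a * b * deriv (fun s => exp (lam (x s)) * pd L (3, i) (x s)) t
          + pd L (0, i) (x t) = 0 := by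
  intro i t
  -- basic differentiability facts
  have hpd : ∀ k : Fin 4 × Fin n, ContDiff ℝ 1 (pd L k) := fun k =>
    (hL.fderiv_right (by norm_num)).clm_apply contDiff_const
  have hep : ContDiff ℝ 1 (fun y : (Fin 4 × Fin n) → ℝ => exp (lam y)) :=
    (hlam.of_le one_le_two).exp
  have hem : ContDiff ℝ 1 (fun y : (Fin 4 × Fin n) → ℝ => exp (-lam y)) :=
    (hlam.of_le one_le_two).neg.exp
  have hgp : ∀ k, Differentiable ℝ (fun y => exp (lam y) * pd L k y) := fun k =>
    (hep.mul (hpd k)).differentiable one_ne_zero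
  have hgm : ∀ k, Differentiable ℝ (fun y => exp (-lam y) * pd L k y) := fun k =>
    (hem.mul (hpd k)).differentiable one_ne_zero
  have hd : ∀ k : Fin 4 × Fin n, Differentiable ℝ (pd L k) := fun k =>
    (hpd k).differentiable one_ne_zero
  have hdep : Differentiable ℝ (fun y : (Fin 4 × Fin n) → ℝ => exp (lam y)) :=
    hep.differentiable one_ne_zero
  have hdem : Differentiable ℝ (fun y : (Fin 4 × Fin n) → ℝ => exp (-lam y)) :=
    hem.differentiable one_ne_zero
  have hω : ∀ w, Differentiable ℝ (fun y => omegaH a b L lam y w) := by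
    intro w
    apply Differentiable.fun_sum
    intro k _
    fun_prop
  -- the key consequence of the dynamical equation
  have key : ∀ k : Fin 4 × Fin n,
      fderiv ℝ (fun y => omegaH a b L lam y (Pi.single k 1)) (x t) (deriv x t)
        = pd L k (x t) := by
    intro k
    have h := hdyn t (Pi.single k 1)
    have hE : (fun y => EH a b L lam y (deriv x t))
        = fun y => omegaH a b L lam y (deriv x t) - L y := by
      funext y
      unfold EH omegaH
      congr 1
      exact Finset.sum_congr rfl fun i _ => by ring
    rw [hE, fderiv_fun_sub (hω _ (x t)) ((hL.differentiable two_ne_zero) (x t))] at h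
    simp only [PhiH, ContinuousLinearMap.sub_apply] at h
    have : pd L k (x t) = fderiv ℝ L (x t) (Pi.single k 1) := rfl
    rw [this]
    linarith
  have hxd : HasDerivAt x (deriv x t) t :=
    ((hx.differentiable two_ne_zero) t).hasDerivAt
  refine ⟨?_, ?_, ?_, ?_⟩
  · have h1 := key ((3 : Fin 4), i)
    rw [red3] at h1
    rw [fderiv_const_mul (hgm (0, i) (x t))] at h1
    have h2 : deriv (fun s => exp (-lam (x s)) * pd L (0, i) (x s)) t
        = fderiv ℝ (fun y => exp (-lam y) * pd L (0, i) y) (x t) (deriv x t) :=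
      ((hgm (0, i) (x t)).hasFDerivAt.comp_hasDerivAt t hxd).deriv
    rw [h2]
    simp only [ContinuousLinearMap.smul_apply, smul_eq_mul] at h1
    linarith
  · have h1 := key ((2 : Fin 4), i)
    rw [red2] at h1
    rw [fderiv_const_mul (hgm (1, i) (x t))] at h1
    have h2 : deriv (fun s => exp (-lam (x s)) * pd L (1, i) (x s)) t
        = fderiv ℝ (fun y => exp (-lam y) * pd L (1, i) y) (x t) (deriv x t) :=
      ((hgm (1, i) (x t)).hasFDerivAt.comp_hasDerivAt t hxd).deriv
    rw [h2]
    simp only [ContinuousLinearMap.smul_apply, smul_eq_mul] at h1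
    linarith
  · have h1 := key ((1 : Fin 4), i)
    rw [red1] at h1
    rw [fderiv_const_mul (hgp (2, i) (x t))] at h1
    have h2 : deriv (fun s => exp (lam (x s)) * pd L (2, i) (x s)) t
        = fderiv ℝ (fun y => exp (lam y) * pd L (2, i) y) (x t) (deriv x t) :=
      ((hgp (2, i) (x t)).hasFDerivAt.comp_hasDerivAt t hxd).deriv
    rw [h2]
    simp only [ContinuousLinearMap.smul_apply, smul_eq_mul] at h1
    linarith
  · have h1 := key ((0 : Fin 4), i)
    rw [red0] at h1
    rw [fderiv_const_mul (hgp (3, i) (x t))] at h1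
    have h2 : deriv (fun s => exp (lam (x s)) * pd L (3, i) (x s)) t
        = fderiv ℝ (fun y => exp (lam y) * pd L (3, i) y) (x t) (deriv x t) :=
      ((hgp (3, i) (x t)).hasFDerivAt.comp_hasDerivAt t hxd).deriv
    rw [h2]
    simp only [ContinuousLinearMap.smul_apply, smul_eq_mul] at h1
    linarith

end
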